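/- Let 𝓛₀, 𝓛₁, 𝓛₂, 𝓛₃ be bounded operators on a complex Hilbert space such that 2 + 𝓛₃ is invertible. Then the operators ℓ₃ = 2𝓛₃(2 + 𝓛₃)^{−1}, ℓ₁ = 2𝓛₁(2 + 𝓛₃)^{−1}, ℓ₂ = 2(2 + 𝓛₃)^{−1}𝓛₂, ℓ₀ = 𝓛₀ − 𝓛₁(2 + 𝓛₃)^{−1}𝓛₂ form the unique solution of the system 𝓛₀ = ℓ₀ + 𝓛₁ℓ₂/2, 𝓛₁ = ℓ₁ + 𝓛₁ℓ₃/2, 𝓛₂ = ℓ₂ + 𝓛₃ℓ₂/2, 𝓛₃ = ℓ₃ + 𝓛₃ℓ₃/2. (This system expresses the passage, via the Ito multiplication table, from the adapted (Ito) coefficients 𝓛ₖ of a quantum stochastic differential equation to the coefficients ℓₖ of its symmetric (Stratonovich) form.) -/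
import Mathlib


open MeasureTheory Complex

/-- Passage from the adapted (Ito) coefficients `𝓛₀,…,𝓛₃` of a QSDE to the coefficients
`ℓ₀,…,ℓ₃` of its symmetric (Stratonovich) form: if `2 + 𝓛₃` is invertible then
`ℓ₃ = 2𝓛₃(2+𝓛₃)⁻¹`, `ℓ₁ = 2𝓛₁(2+𝓛₃)⁻¹`, `ℓ₂ = 2(2+𝓛₃)⁻¹𝓛₂`,
`ℓ₀ = 𝓛₀ − 𝓛₁(2+𝓛₃)⁻¹𝓛₂` form the unique solution of the system
`𝓛₀ = ℓ₀ + 𝓛₁ℓ₂/2`, `𝓛₁ = ℓ₁ + 𝓛₁ℓ₃/2`, `𝓛₂ = ℓ₂ + 𝓛₃ℓ₂/2`, `𝓛₃ = ℓ₃ + 𝓛₃ℓ₃/2`. -/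
theorem ito_to_stratonovich_coefficients {H : Type*} [NormedAddCommGroup H]
    [InnerProductSpace ℂ H] [CompleteSpace H]
    (L0 L1 L2 L3 : H →L[ℂ] H) (hinv : IsUnit ((2 : H →L[ℂ] H) + L3)) :
    ∀ e0 e1 e2 e3 : H →L[ℂ] H,
      (L0 = e0 + ((2:ℂ)⁻¹) • (L1 * e2) ∧
       L1 = e1 + ((2:ℂ)⁻¹) • (L1 * e3) ∧
       L2 = e2 + ((2:ℂ)⁻¹) • (L3 * e2) ∧
       L3 = e3 + ((2:ℂ)⁻¹) • (L3 * e3)) ↔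
      (e3 = (2 : ℂ) • (L3 * Ring.inverse ((2 : H →L[ℂ] H) + L3)) ∧
       e1 = (2 : ℂ) • (L1 * Ring.inverse ((2 : H →L[ℂ] H) + L3)) ∧
       e2 = (2 : ℂ) • (Ring.inverse ((2 : H →L[ℂ] H) + L3) * L2) ∧
       e0 = L0 - L1 * Ring.inverse ((2 : H →L[ℂ] H) + L3) * L2) := by
  intro e0 e1 e2 e3
  set A : H →L[ℂ] H := (2 : H →L[ℂ] H) + L3 with hA
  set R : H →L[ℂ] H := Ring.inverse A with hR
  have hAR : A * R = 1 := Ring.mul_inverse_cancel A hinv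
  have hRA : R * A = 1 := Ring.inverse_mul_cancel A hinv
  have hAL : A * L3 = L3 * A := by
    simp only [hA, add_mul, mul_add, two_mul, mul_two]
  have hcomm : R * L3 = L3 * R := by
    have : R * L3 = R * L3 * (A * R) := by rw [hAR, mul_one]
    calc R * L3 = R * (L3 * A) * R := by
          rw [this, ← mul_assoc, mul_assoc R L3 A]
      _ = R * (A * L3) * R := by rw [hAL]
      _ = L3 * R := by rw [← mul_assoc, hRA, one_mul]
  -- expansion of A * x
  have hAx : ∀ x : H →L[ℂ] H, A * x = (2:ℂ) • x + L3 * x := by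
    intro x
    simp only [hA, add_mul, two_mul, two_smul]
  have hhalf : ∀ z : H →L[ℂ] H, (2:ℂ) • ((2:ℂ)⁻¹ • z) = z := by
    intro z; rw [smul_smul]; norm_num
  -- the key equivalence
  have main : ∀ x y : H →L[ℂ] H,
      (y = x + (2:ℂ)⁻¹ • (L3 * x)) ↔ (x = (2:ℂ) • (R * y)) := by
    intro x y
    constructor
    · intro h
      have h2 : A * x = (2:ℂ) • y := by
        rw [h, smul_add, hhalf, hAx]
      calc x = (R * A) * x := by rw [hRA, one_mul]
        _ = R * (A * x) := by rw [mul_assoc]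
        _ = R * ((2:ℂ) • y) := by rw [h2]
        _ = (2:ℂ) • (R * y) := by rw [mul_smul_comm]
    · intro h
      subst h
      have : (2:ℂ)⁻¹ • (L3 * ((2:ℂ) • (R * y))) = L3 * (R * y) := by
        rw [mul_smul_comm, smul_smul]; norm_num
      rw [this]
      calc y = (A * R) * y := by rw [hAR, one_mul]
        _ = ((2:ℂ) • R + L3 * R) * y := by
              rw [hA, add_mul, two_mul, two_smul, add_mul]
        _ = (2:ℂ) • (R * y) + L3 * (R * y) := by
              rw [add_mul, smul_mul_assoc, mul_assoc]
  constructor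
  · rintro ⟨h0, h1, h2, h3⟩
    have he3 : e3 = (2:ℂ) • (L3 * R) := by
      rw [(main e3 L3).mp h3, hcomm]
    have he2 : e2 = (2:ℂ) • (R * L2) := (main e2 L2).mp h2
    have he1 : e1 = (2:ℂ) • (L1 * R) := by
      have : (2:ℂ)⁻¹ • (L1 * e3) = L1 * L3 * R := by
        rw [he3, mul_smul_comm, smul_smul, mul_assoc]; norm_num
      have hL1 : L1 = e1 + L1 * L3 * R := by rw [← this]; exact h1
      have expand : L1 = (2:ℂ) • (L1 * R) + L1 * L3 * R := by
        calc L1 = L1 * (A * R) := by rw [hAR, mul_one]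
          _ = L1 * A * R := by rw [mul_assoc]
          _ = (L1 * 2 + L1 * L3) * R := by rw [hA, mul_add]
          _ = (2:ℂ) • (L1 * R) + L1 * L3 * R := by
                rw [add_mul, mul_two, two_smul, add_mul]
      have := hL1.symm.trans expand
      -- e1 + L1*L3*R = 2•(L1*R) + L1*L3*R
      exact add_right_cancel this
    have he0 : e0 = L0 - L1 * R * L2 := by
      have : (2:ℂ)⁻¹ • (L1 * e2) = L1 * R * L2 := by
        rw [he2, mul_smul_comm, smul_smul, mul_assoc]; norm_num
      rw [h0, this]; abel
    exact ⟨he3, he1, he2, he0⟩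
  · rintro ⟨he3, he1, he2, he0⟩
    have h3 : L3 = e3 + (2:ℂ)⁻¹ • (L3 * e3) :=
      (main e3 L3).mpr (by rw [he3, hcomm])
    have h2 : L2 = e2 + (2:ℂ)⁻¹ • (L3 * e2) := (main e2 L2).mpr he2
    have h1 : L1 = e1 + (2:ℂ)⁻¹ • (L1 * e3) := by
      have : (2:ℂ)⁻¹ • (L1 * e3) = L1 * L3 * R := by
        rw [he3, mul_smul_comm, smul_smul, mul_assoc]; norm_num
      rw [this, he1]
      calc L1 = L1 * (A * R) := by rw [hAR, mul_one]
        _ = L1 * A * R := by rw [mul_assoc]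
        _ = (L1 * 2 + L1 * L3) * R := by rw [hA, mul_add]
        _ = (2:ℂ) • (L1 * R) + L1 * L3 * R := by
              rw [add_mul, mul_two, two_smul, add_mul]
    have h0 : L0 = e0 + (2:ℂ)⁻¹ • (L1 * e2) := by
      have : (2:ℂ)⁻¹ • (L1 * e2) = L1 * R * L2 := by
        rw [he2, mul_smul_comm, smul_smul, mul_assoc]; norm_num
      rw [this, he0]; abel
    exact ⟨h0, h1, h2, h3⟩
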